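/- If cov(M) = 𝔡 then cov(E) = max{cov(M), cov(N)}. -/

import Mathlib

open MeasureTheory Set Filter Cardinal

/-- `μ` is the uniform product ("fair coin") probability measure on Cantor space `2^ω`,
characterized by its values on cylinders. -/
def IsFairCoin (μ : Measure (ℕ → Bool)) : Prop :=
  ∀ (s : Finset ℕ) (σ : ℕ → Bool),
    μ {x : ℕ → Bool | ∀ i ∈ s, x i = σ i} = (1 / 2 : ENNReal) ^ s.card

/-- The σ-ideal of μ-null sets. -/
def nullIdeal (μ : Measure (ℕ → Bool)) : Set (Set (ℕ → Bool)) := {A | μ A = 0}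

/-- The σ-ideal of meager subsets of Cantor space. -/
def meagerIdeal : Set (Set (ℕ → Bool)) := {A | IsMeagre A}

/-- The σ-ideal generated by closed measure zero sets. -/
def closedNullIdeal (μ : Measure (ℕ → Bool)) : Set (Set (ℕ → Bool)) :=
  {A | ∃ F : ℕ → Set (ℕ → Bool), (∀ n, IsClosed (F n) ∧ μ (F n) = 0) ∧ A ⊆ ⋃ n, F n}

/-- `add(I, J)`: the least cardinality of a subfamily of `I` whose union is not in `J`. -/
noncomputable def addIJ (I J : Set (Set (ℕ → Bool))) : Cardinal :=
  sInf {c : Cardinal | ∃ A : Set (Set (ℕ → Bool)), A ⊆ I ∧ ⋃₀ A ∉ J ∧ c = #A}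

/-- `cov(J)`: the least cardinality of a subfamily of `J` covering the whole space. -/
noncomputable def covI (J : Set (Set (ℕ → Bool))) : Cardinal :=
  sInf {c : Cardinal | ∃ A : Set (Set (ℕ → Bool)), A ⊆ J ∧ ⋃₀ A = Set.univ ∧ c = #A}

/-- `unif(J)`: the least cardinality of a set of reals not in `J`. -/
noncomputable def unifI (J : Set (Set (ℕ → Bool))) : Cardinal :=
  sInf {c : Cardinal | ∃ X : Set (ℕ → Bool), X ∉ J ∧ c = #X}

/-- `cof(I, J)`: the least cardinality of a subfamily of `J` cofinal over `I`. -/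
noncomputable def cofIJ (I J : Set (Set (ℕ → Bool))) : Cardinal :=
  sInf {c : Cardinal | ∃ A : Set (Set (ℕ → Bool)), A ⊆ J ∧
    (∀ B ∈ I, ∃ C ∈ A, B ⊆ C) ∧ c = #A}

/-- The dominating number 𝔡. -/
noncomputable def frakD : Cardinal :=
  sInf {c : Cardinal | ∃ F : Set (ℕ → ℕ),
    (∀ g : ℕ → ℕ, ∃ f ∈ F, ∀ᶠ n in atTop, g n ≤ f n) ∧ c = #F}

/-- The unbounding number 𝔟. -/
noncomputable def frakB : Cardinal :=
  sInf {c : Cardinal | ∃ F : Set (ℕ → ℕ),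
    (∀ g : ℕ → ℕ, ∃ f ∈ F, ¬ ∀ᶠ n in atTop, f n ≤ g n) ∧ c = #F}

def cylL (l : List Bool) : Set (ℕ → Bool) := {x | ∀ i < l.length, x i = l.getD i false}

lemma isClopen_cylL (l : List Bool) : IsClopen (cylL l) := by
  have h : cylL l = ⋂ i ∈ Finset.range l.length, {x : ℕ → Bool | x i = l.getD i false} := by
    ext x; simp [cylL]
  rw [h]
  refine isClopen_biInter_finset fun i _ => ?_
  show IsClopen ((fun x : ℕ → Bool => x i) ⁻¹' {l.getD i false})
  exact (isClopen_discrete _).preimage (continuous_apply i)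

lemma measure_univ_fair (μ : Measure (ℕ → Bool)) (hμ : IsFairCoin μ) : μ Set.univ = 1 := by
  have := hμ ∅ (fun _ => false)
  simpa using this

lemma singleton_null (μ : Measure (ℕ → Bool)) (hμ : IsFairCoin μ) (x : ℕ → Bool) :
    μ {x} = 0 := by
  have h : ∀ n : ℕ, μ {x} ≤ (1/2 : ENNReal) ^ n := by
    intro n
    have hsub : {x} ⊆ {y : ℕ → Bool | ∀ i ∈ Finset.range n, y i = x i} := by
      rintro y rfl; intro i _; rfl
    calc μ {x} ≤ μ {y : ℕ → Bool | ∀ i ∈ Finset.range n, y i = x i} := measure_mono hsub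
    _ = (1/2 : ENNReal)^(Finset.range n).card := hμ _ x
    _ = (1/2 : ENNReal)^n := by rw [Finset.card_range]
  exact le_antisymm (ge_of_tendsto'
    (ENNReal.tendsto_pow_atTop_nhds_zero_of_lt_one (by norm_num)) h) (zero_le)

lemma open_pos (μ : Measure (ℕ → Bool)) (hμ : IsFairCoin μ) {U : Set (ℕ → Bool)}
    (hU : IsOpen U) (hne : U.Nonempty) : μ U ≠ 0 := by
  obtain ⟨x, hx⟩ := hne
  obtain ⟨I, u, h1, h2⟩ := isOpen_pi_iff.mp hU x hx
  have hsub : {y : ℕ → Bool | ∀ i ∈ I, y i = x i} ⊆ U := by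
    intro y hy
    apply h2
    rw [Set.mem_pi]
    intro a ha
    rw [hy a (Finset.mem_coe.mp ha)]
    exact (h1 a (Finset.mem_coe.mp ha)).2
  intro h0
  have hz : μ {y : ℕ → Bool | ∀ i ∈ I, y i = x i} = 0 :=
    le_antisymm (h0 ▸ measure_mono hsub) (zero_le)
  rw [hμ I x] at hz
  exact pow_ne_zero _ (by norm_num) hz

lemma open_eq_iUnion_clopen {U : Set (ℕ → Bool)} (hU : IsOpen U) :
    ∃ V : ℕ → Set (ℕ → Bool), (∀ k, IsClopen (V k)) ∧ (∀ k, V k ⊆ U) ∧ U = ⋃ k, V k := by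
  classical
  obtain ⟨eL, heL⟩ := exists_surjective_nat (List Bool)
  refine ⟨fun k => if cylL (eL k) ⊆ U then cylL (eL k) else ∅, ?_, ?_, ?_⟩
  · intro k
    dsimp only
    split
    · exact isClopen_cylL _
    · exact isClopen_empty
  · intro k
    dsimp only
    split
    · assumption
    · exact empty_subset U
  · apply Subset.antisymm
    · intro x hx
      obtain ⟨I, u, h1, h2⟩ := isOpen_pi_iff.mp hU x hx
      set N := I.sup id + 1 with hN
      have hIN : ∀ a ∈ I, a < N := fun a ha =>
        Nat.lt_succ_of_le (Finset.le_sup (f := id) ha)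
      set l := List.ofFn (fun i : Fin N => x i) with hl
      have hlen : l.length = N := by simp [hl, hN]
      have hget : ∀ i, i < N → l.getD i false = x i := by
        intro i hi
        have h' : i < l.length := by simpa [hlen] using hi
        rw [List.getD_eq_getElem l false h']
        have h2' := List.getElem_ofFn (f := fun j : Fin N => x j) (i := i) h'
        exact h2'
      have hxl : x ∈ cylL l := by
        intro i hi
        exact (hget i (by simpa [hlen] using hi)).symm
      have hsubU : cylL l ⊆ U := by
        intro y hy
        apply h2
        rw [Set.mem_pi]
        intro a ha
        have ha' : a ∈ I := Finset.mem_coe.mp ha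
        have : y a = x a := by
          rw [hy a (by rw [hlen]; exact hIN a ha')]
          exact hget a (hIN a ha')
        rw [this]
        exact (h1 a ha').2
      obtain ⟨k, hk⟩ := heL l
      refine mem_iUnion.mpr ⟨k, ?_⟩
      rw [hk, if_pos hsubU]
      exact hxl
    · exact iUnion_subset fun k => by split <;> simp_all

lemma null_key (μ : Measure (ℕ → Bool)) (hμ : IsFairCoin μ) {B : Set (ℕ → Bool)}
    (hB : μ B = 0) :
    ∃ W : ℕ → ℕ → Set (ℕ → Bool), (∀ n k, IsClopen (W n k)) ∧ (∀ n, B ⊆ ⋃ k, W n k) ∧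
      (∀ n, μ (⋃ k, W n k) ≤ (1/2 : ENNReal)^n) := by
  haveI : IsFiniteMeasure μ :=
    ⟨by rw [measure_univ_fair μ hμ]; exact ENNReal.one_lt_top⟩
  have hU : ∀ n : ℕ, ∃ U, B ⊆ U ∧ IsOpen U ∧ μ U ≤ (1/2 : ENNReal)^n := by
    intro n
    obtain ⟨U, hBU, hUo, hUlt⟩ := Set.exists_isOpen_lt_of_lt B ((1/2 : ENNReal)^n)
      (by rw [hB]; exact pos_iff_ne_zero.mpr (pow_ne_zero _ (by norm_num)))
    exact ⟨U, hBU, hUo, hUlt.le⟩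
  choose U hBU hUo hUle using hU
  choose V hV1 hV2 hV3 using fun n => open_eq_iUnion_clopen (hUo n)
  exact ⟨fun n => V n, hV1, fun n => (hV3 n) ▸ hBU n, fun n => by rw [← hV3 n]; exact hUle n⟩
lemma E_null (μ : Measure (ℕ → Bool)) {B : Set (ℕ → Bool)} (hB : B ∈ closedNullIdeal μ) :
    μ B = 0 := by
  obtain ⟨F, hF, hsub⟩ := hB
  exact le_antisymm (le_trans (measure_mono hsub)
    (le_of_eq (measure_iUnion_null fun n => (hF n).2))) (zero_le)

lemma E_meagre (μ : Measure (ℕ → Bool)) (hμ : IsFairCoin μ) {B : Set (ℕ → Bool)}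
    (hB : B ∈ closedNullIdeal μ) : IsMeagre B := by
  obtain ⟨F, hF, hsub⟩ := hB
  refine IsMeagre.mono hsub (isMeagre_iUnion fun n => ?_)
  have hnd : IsNowhereDense (F n) := by
    rw [(hF n).1.isNowhereDense_iff]
    by_contra hne
    obtain ⟨x, hx⟩ := nonempty_iff_ne_empty.mpr hne
    exact open_pos μ hμ isOpen_interior ⟨x, hx⟩
      (le_antisymm ((hF n).2 ▸ measure_mono interior_subset) (zero_le))
  exact isMeagre_iff_countable_union_isNowhereDense.mpr
    ⟨{F n}, by simpa using hnd, countable_singleton _, by simp⟩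

theorem cov_E_eq_max (μ : Measure (ℕ → Bool)) (hμ : IsFairCoin μ)
    (h : covI meagerIdeal = frakD) :
    covI (closedNullIdeal μ) = max (covI meagerIdeal) (covI (nullIdeal μ)) := by
  classical
  -- the singleton cover, witnessing nonemptiness
  have hsingE : ∀ x : ℕ → Bool, ({x} : Set (ℕ → Bool)) ∈ closedNullIdeal μ := fun x =>
    ⟨fun _ => {x}, fun _ => ⟨isClosed_singleton, singleton_null μ hμ x⟩,
      subset_iUnion (fun _ : ℕ => ({x} : Set (ℕ → Bool))) 0⟩
  have hcov0 : ⋃₀ (Set.range fun x : ℕ → Bool => ({x} : Set (ℕ → Bool))) = Set.univ := by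
    ext x
    simp only [mem_sUnion, mem_range, mem_univ, iff_true]
    exact ⟨{x}, ⟨x, rfl⟩, rfl⟩
  have hEne : {c : Cardinal | ∃ A : Set (Set (ℕ → Bool)), A ⊆ closedNullIdeal μ ∧
      ⋃₀ A = Set.univ ∧ c = #A}.Nonempty :=
    ⟨_, Set.range fun x : ℕ → Bool => ({x} : Set (ℕ → Bool)),
      by rintro B ⟨x, rfl⟩; exact hsingE x, hcov0, rfl⟩
  have hNne : {c : Cardinal | ∃ A : Set (Set (ℕ → Bool)), A ⊆ nullIdeal μ ∧
      ⋃₀ A = Set.univ ∧ c = #A}.Nonempty :=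
    ⟨_, Set.range fun x : ℕ → Bool => ({x} : Set (ℕ → Bool)),
      by rintro B ⟨x, rfl⟩; exact singleton_null μ hμ x, hcov0, rfl⟩
  -- ℵ₀ ≤ cov(N)
  have haleph : ℵ₀ ≤ covI (nullIdeal μ) := by
    refine le_csInf hNne ?_
    rintro c ⟨A, hA, hcov, rfl⟩
    by_contra hlt
    have hfin : A.Finite := Cardinal.lt_aleph0_iff_set_finite.mp (not_le.mp hlt)
    have hz : μ (⋃₀ A) = 0 := (measure_sUnion_null_iff hfin.countable).mpr hA
    rw [hcov, measure_univ_fair μ hμ] at hz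
    exact one_ne_zero hz
  -- ≥ direction
  have hge : max (covI meagerIdeal) (covI (nullIdeal μ)) ≤ covI (closedNullIdeal μ) := by
    refine le_csInf hEne ?_
    rintro c ⟨A, hAE, hAcov, rfl⟩
    exact max_le
      (csInf_le (OrderBot.bddBelow _) ⟨A, fun B hB => E_meagre μ hμ (hAE hB), hAcov, rfl⟩)
      (csInf_le (OrderBot.bddBelow _) ⟨A, fun B hB => E_null μ (hAE hB), hAcov, rfl⟩)
  -- ≤ direction
  set κ := max (covI meagerIdeal) (covI (nullIdeal μ)) with hκ
  have hℵκ : ℵ₀ ≤ κ := le_trans haleph (le_max_right _ _)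
  have hκκ : κ * κ ≤ κ := by
    refine le_trans (Cardinal.mul_le_max κ κ) ?_
    rw [max_self]
    exact max_le le_rfl hℵκ
  -- a null cover of size cov(N)
  obtain ⟨AN, hANnull, hANcov, hANcard⟩ := csInf_mem hNne
  -- a dominating family of size 𝔡
  have hDne : {c : Cardinal | ∃ F : Set (ℕ → ℕ),
      (∀ g : ℕ → ℕ, ∃ f ∈ F, ∀ᶠ n in atTop, g n ≤ f n) ∧ c = #F}.Nonempty :=
    ⟨_, Set.univ, fun g => ⟨g, mem_univ g, Eventually.of_forall fun _ => le_rfl⟩, rfl⟩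
  obtain ⟨D, hDdom, hDcard⟩ := csInf_mem hDne
  -- an everywhere-dominating family
  set D' : Set (ℕ → ℕ) := Set.range (fun p : ↥D × ℕ => fun n => (p.1 : ℕ → ℕ) n + p.2)
    with hD'
  have hD'dom : ∀ g : ℕ → ℕ, ∃ f ∈ D', ∀ n, g n ≤ f n := by
    intro g
    obtain ⟨f, hfD, hf⟩ := hDdom g
    obtain ⟨N, hN⟩ := eventually_atTop.mp hf
    refine ⟨fun n => f n + (Finset.range N).sup g, ⟨(⟨f, hfD⟩, (Finset.range N).sup g), rfl⟩, ?_⟩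
    intro n
    rcases lt_or_ge n N with hn | hn
    · exact le_trans (Finset.le_sup (Finset.mem_range.mpr hn)) (Nat.le_add_left _ _)
    · exact le_trans (hN n hn) (Nat.le_add_right _ _)
  have hD'card : #↥D' ≤ κ := by
    have h1 : #↥D ≤ κ := by
      have hd : frakD = #↥D := hDcard
      rw [← hd, ← h]
      exact le_max_left _ _
    calc #↥D' ≤ #(↥D × ℕ) := Cardinal.mk_range_le
    _ = #↥D * ℵ₀ := by rw [Cardinal.mk_prod, Cardinal.mk_nat, Cardinal.lift_id, Cardinal.lift_id]
    _ ≤ κ * κ := mul_le_mul' h1 hℵκ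
    _ ≤ κ := hκκ
  -- clopen approximations of each null set in the cover
  have key : ∀ B : ↥AN, ∃ W : ℕ → ℕ → Set (ℕ → Bool), (∀ n k, IsClopen (W n k)) ∧
      (∀ n, (B : Set (ℕ → Bool)) ⊆ ⋃ k, W n k) ∧
      (∀ n, μ (⋃ k, W n k) ≤ (1/2 : ENNReal)^n) :=
    fun B => null_key μ hμ (hANnull B.2)
  choose W hW1 hW2 hW3 using key
  set FF : ↥AN → (ℕ → ℕ) → Set (ℕ → Bool) :=
    fun B f => ⋂ n, ⋃ k ∈ Finset.range (f n + 1), W B n k with hFF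
  have hFFclosed : ∀ B f, IsClosed (FF B f) := by
    intro B f
    refine isClosed_iInter fun n => ?_
    have : IsClopen (⋃ k ∈ Finset.range (f n + 1), W B n k) :=
      isClopen_biUnion_finset fun k _ => hW1 B n k
    exact this.isClosed
  have hFFnull : ∀ B f, μ (FF B f) = 0 := by
    intro B f
    have hle : ∀ n : ℕ, μ (FF B f) ≤ (1/2 : ENNReal)^n := by
      intro n
      refine le_trans (measure_mono ?_) (hW3 B n)
      refine le_trans (iInter_subset _ n) ?_
      exact iUnion₂_subset fun k _ => subset_iUnion _ k
    exact le_antisymm (ge_of_tendsto'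
      (ENNReal.tendsto_pow_atTop_nhds_zero_of_lt_one (by norm_num)) hle) (zero_le)
  have hFFmem : ∀ B f, FF B f ∈ closedNullIdeal μ := fun B f =>
    ⟨fun _ => FF B f, fun _ => ⟨hFFclosed B f, hFFnull B f⟩,
      subset_iUnion (fun _ : ℕ => FF B f) 0⟩
  have hcovF : ∀ x : ℕ → Bool, ∃ B : ↥AN, ∃ f : ↥D', x ∈ FF B (f : ℕ → ℕ) := by
    intro x
    have hx : x ∈ ⋃₀ AN := hANcov ▸ mem_univ x
    obtain ⟨B, hBA, hxB⟩ := hx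
    have hxn : ∀ n, ∃ k, x ∈ W ⟨B, hBA⟩ n k := fun n => mem_iUnion.mp (hW2 ⟨B, hBA⟩ n hxB)
    choose g hg using hxn
    obtain ⟨f, hfD', hf⟩ := hD'dom g
    refine ⟨⟨B, hBA⟩, ⟨f, hfD'⟩, ?_⟩
    refine mem_iInter.mpr fun n => ?_
    exact mem_iUnion₂.mpr ⟨g n, Finset.mem_range.mpr (Nat.lt_succ_of_le (hf n)), hg n⟩
  set 𝒜 : Set (Set (ℕ → Bool)) := Set.range (fun p : ↥AN × ↥D' => FF p.1 (p.2 : ℕ → ℕ))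
    with h𝒜
  have h𝒜E : 𝒜 ⊆ closedNullIdeal μ := by
    rintro S ⟨p, rfl⟩
    exact hFFmem p.1 p.2
  have h𝒜cov : ⋃₀ 𝒜 = Set.univ := by
    ext x
    simp only [mem_sUnion, mem_univ, iff_true]
    obtain ⟨B, f, hx⟩ := hcovF x
    exact ⟨FF B (f : ℕ → ℕ), ⟨(B, f), rfl⟩, hx⟩
  have h𝒜card : #↥𝒜 ≤ κ := by
    have h2 : #↥AN ≤ κ := by
      have hn : covI (nullIdeal μ) = #↥AN := hANcard
      rw [← hn]
      exact le_max_right _ _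
    calc #↥𝒜 ≤ #(↥AN × ↥D') := Cardinal.mk_range_le
    _ = #↥AN * #↥D' := by rw [Cardinal.mk_prod, Cardinal.lift_id, Cardinal.lift_id]
    _ ≤ κ * κ := mul_le_mul' h2 hD'card
    _ ≤ κ := hκκ
  have hle : covI (closedNullIdeal μ) ≤ κ :=
    le_trans (csInf_le (OrderBot.bddBelow _) ⟨𝒜, h𝒜E, h𝒜cov, rfl⟩) h𝒜card
  exact le_antisymm hle hge
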